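/- In the graph obtained from the complete bipartite graph K_{k,k} by deleting a perfect matching (vertex u_i on the left adjacent to v_j on the right iff i ≠ j), every subset ω of the left side of odd cardinality generates a minimal local set, namely {u_i : i ∈ ω} ∪ {v_j : j ∉ ω}; hence this graph has at least 2^{k-1} minimal local sets. -/

import Mathlib

open scoped Classical

/-- The odd neighborhood of a set `D` of vertices: the vertices having an odd
number of neighbors in `D`. -/
noncomputable def oddN {V : Type*} [Fintype V] (G : SimpleGraph V) (D : Finset V) :
    Finset V :=
  Finset.univ.filter fun v => Odd (D.filter fun d => G.Adj v d).card

/-- A local set of `G`: a set of the form `D ∪ Odd(D)` for some nonempty `D`. -/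
noncomputable def IsLocalSet {V : Type*} [Fintype V] (G : SimpleGraph V)
    (L : Finset V) : Prop :=
  ∃ D : Finset V, D.Nonempty ∧ L = D ∪ oddN G D

/-- A minimal local set: a local set containing no other local set. -/
noncomputable def IsMinimalLocalSet {V : Type*} [Fintype V] (G : SimpleGraph V)
    (L : Finset V) : Prop :=
  IsLocalSet G L ∧ ∀ L' : Finset V, IsLocalSet G L' → L' ⊆ L → L' = L

/-- The graph `K_{k,k} Δ M_k`: left vertices `Sum.inl i`, right vertices `Sum.inr j`,
with `u_i` adjacent to `v_j` iff `i ≠ j`, and no edges within a side. -/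
def kkmk (k : ℕ) : SimpleGraph (Fin k ⊕ Fin k) where
  Adj a b :=
    match a, b with
    | Sum.inl i, Sum.inr j => i ≠ j
    | Sum.inr i, Sum.inl j => j ≠ i
    | _, _ => False
  symm := by
    constructor
    intro a b h
    rcases a with i | i <;> rcases b with j | j <;> exact h
  loopless := by
    constructor
    intro a h
    rcases a with i | i <;> exact h

variable {k : ℕ}

noncomputable def leftP (D : Finset (Fin k ⊕ Fin k)) : Finset (Fin k) :=
  Finset.univ.filter fun i => Sum.inl i ∈ D
noncomputable def rightP (D : Finset (Fin k ⊕ Fin k)) : Finset (Fin k) :=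
  Finset.univ.filter fun i => Sum.inr i ∈ D

lemma filter_adj_inl (D : Finset (Fin k ⊕ Fin k)) (i : Fin k) :
    D.filter (fun d => (kkmk k).Adj (Sum.inl i) d) = ((rightP D).erase i).image Sum.inr := by
  ext d
  rcases d with j | j <;>
    simp [kkmk, rightP, Finset.mem_erase, and_comm, eq_comm, ne_comm]

lemma filter_adj_inr (D : Finset (Fin k ⊕ Fin k)) (i : Fin k) :
    D.filter (fun d => (kkmk k).Adj (Sum.inr i) d) = ((leftP D).erase i).image Sum.inl := by
  ext d
  rcases d with j | j <;>
    simp [kkmk, leftP, Finset.mem_erase, and_comm, eq_comm, ne_comm]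

lemma mem_oddN_inl (D : Finset (Fin k ⊕ Fin k)) (i : Fin k) :
    Sum.inl i ∈ oddN (kkmk k) D ↔ Odd ((rightP D).erase i).card := by
  simp [oddN, filter_adj_inl, Finset.card_image_of_injective _ Sum.inr_injective]

lemma mem_oddN_inr (D : Finset (Fin k ⊕ Fin k)) (i : Fin k) :
    Sum.inr i ∈ oddN (kkmk k) D ↔ Odd ((leftP D).erase i).card := by
  simp [oddN, filter_adj_inr, Finset.card_image_of_injective _ Sum.inl_injective]

lemma leftP_image_inl (ω : Finset (Fin k)) : leftP (ω.image Sum.inl) = ω := by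
  ext i; simp [leftP]

lemma rightP_image_inl (ω : Finset (Fin k)) : rightP (ω.image Sum.inl) = ∅ := by
  ext i; simp [rightP]

lemma oddN_image_inl (ω : Finset (Fin k)) (hω : Odd ω.card) :
    oddN (kkmk k) (ω.image Sum.inl) = ωᶜ.image Sum.inr := by
  ext a
  rcases a with i | j
  · simp [mem_oddN_inl, rightP_image_inl]
  · rw [mem_oddN_inr, leftP_image_inl]
    by_cases hj : j ∈ ω
    · rw [Finset.card_erase_of_mem hj]
      have hne : ¬ Odd (ω.card - 1) := by
        obtain ⟨m, hm⟩ := hω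
        simp [hm, Nat.not_odd_iff_even]
      simp only [Finset.mem_image, hne, false_iff]
      rintro ⟨x, hx, hxe⟩
      cases Sum.inr_injective hxe
      simp only [Finset.mem_compl] at hx
      exact hx hj
    · rw [Finset.erase_eq_of_notMem hj]
      simp only [Finset.mem_image]
      exact ⟨fun _ => ⟨j, by simpa using hj, rfl⟩, fun _ => hω⟩

lemma mem_leftP {D : Finset (Fin k ⊕ Fin k)} {i : Fin k} :
    i ∈ leftP D ↔ Sum.inl i ∈ D := by simp [leftP]

lemma mem_rightP {D : Finset (Fin k ⊕ Fin k)} {i : Fin k} :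
    i ∈ rightP D ↔ Sum.inr i ∈ D := by simp [rightP]

lemma mem_L_inl {ω : Finset (Fin k)} {i : Fin k} :
    Sum.inl i ∈ ω.image Sum.inl ∪ ωᶜ.image Sum.inr ↔ i ∈ ω := by simp

lemma mem_L_inr {ω : Finset (Fin k)} {j : Fin k} :
    Sum.inr j ∈ ω.image Sum.inl ∪ ωᶜ.image Sum.inr ↔ j ∉ ω := by simp

lemma L_subset (ω : Finset (Fin k)) (hω : Odd ω.card) (D : Finset (Fin k ⊕ Fin k))
    (hD : D.Nonempty) (hsub : D ∪ oddN (kkmk k) D ⊆ ω.image Sum.inl ∪ ωᶜ.image Sum.inr) :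
    ω.image Sum.inl ∪ ωᶜ.image Sum.inr ⊆ D ∪ oddN (kkmk k) D := by
  set A := leftP D with hA
  set B := rightP D with hB
  have hAω : ∀ i ∈ A, i ∈ ω := fun i hi =>
    mem_L_inl.mp (hsub (Finset.mem_union_left _ (mem_leftP.mp hi)))
  have hBω : ∀ j ∈ B, j ∉ ω := fun j hj =>
    mem_L_inr.mp (hsub (Finset.mem_union_left _ (mem_rightP.mp hj)))
  have hOl : ∀ i : Fin k, Odd ((B.erase i).card) → i ∈ ω := fun i hi =>
    mem_L_inl.mp (hsub (Finset.mem_union_right _ ((mem_oddN_inl D i).mpr hi)))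
  have hOr : ∀ j : Fin k, Odd ((A.erase j).card) → j ∉ ω := fun j hj =>
    mem_L_inr.mp (hsub (Finset.mem_union_right _ ((mem_oddN_inr D j).mpr hj)))
  by_cases hAodd : Odd A.card
  · -- A = ω
    have hωA : ∀ j ∈ ω, j ∈ A := by
      intro j hj
      by_contra hjA
      exact hOr j (by rwa [Finset.erase_eq_of_notMem hjA]) hj
    intro a ha
    rcases a with i | j
    · exact Finset.mem_union_left _ (mem_leftP.mp (hωA i (mem_L_inl.mp ha)))
    · have hj : j ∉ ω := mem_L_inr.mp ha
      have hjA : j ∉ A := fun h => hj (hAω j h)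
      exact Finset.mem_union_right _ ((mem_oddN_inr D j).mpr
        (by rwa [Finset.erase_eq_of_notMem hjA]))
  · rw [Nat.not_odd_iff_even] at hAodd
    have hA0 : A = ∅ := by
      by_contra h
      obtain ⟨j, hj⟩ := Finset.nonempty_of_ne_empty h
      have hodd : Odd ((A.erase j).card) := by
        rw [Finset.card_erase_of_mem hj]
        exact Nat.Even.sub_odd (Finset.card_pos.mpr ⟨j, hj⟩) hAodd odd_one
      exact hOr j hodd (hAω j hj)
    have hBne : B.Nonempty := by
      obtain ⟨d, hd⟩ := hD
      rcases d with i | j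
      · exact absurd (hA0 ▸ (mem_leftP.mpr hd : i ∈ A)) (Finset.notMem_empty i)
      · exact ⟨j, mem_rightP.mpr hd⟩
    have hBodd : Odd B.card := by
      by_contra h
      rw [Nat.not_odd_iff_even] at h
      obtain ⟨j, hj⟩ := hBne
      have hodd : Odd ((B.erase j).card) := by
        rw [Finset.card_erase_of_mem hj]
        exact Nat.Even.sub_odd (Finset.card_pos.mpr ⟨j, hj⟩) h odd_one
      exact hBω j hj (hOl j hodd)
    have hωB : ∀ j, j ∉ ω → j ∈ B := by
      intro j hj
      by_contra hjB
      exact hj (hOl j (by rwa [Finset.erase_eq_of_notMem hjB]))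
    intro a ha
    rcases a with i | j
    · have hi : i ∈ ω := mem_L_inl.mp ha
      have hiB : i ∉ B := fun h => hBω i h hi
      exact Finset.mem_union_right _ ((mem_oddN_inl D i).mpr
        (by rwa [Finset.erase_eq_of_notMem hiB]))
    · exact Finset.mem_union_left _ (mem_rightP.mp (hωB j (mem_L_inr.mp ha)))

lemma L_min (ω : Finset (Fin k)) (hω : Odd ω.card) :
    IsMinimalLocalSet (kkmk k) (ω.image Sum.inl ∪ ωᶜ.image Sum.inr) := by
  constructor
  · refine ⟨ω.image Sum.inl, Finset.Nonempty.image (Finset.card_pos.mp hω.pos) _, ?_⟩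
    refine Finset.ext fun a => ?_
    simp only [Finset.mem_union, oddN_image_inl ω hω]
  · rintro L' ⟨D, hD, rfl⟩ hsub
    have hsub' : D ∪ oddN (kkmk k) D ⊆ ω.image Sum.inl ∪ ωᶜ.image Sum.inr := by
      intro x hx
      apply hsub
      simp only [Finset.mem_union] at hx ⊢
      exact hx
    refine Finset.ext fun a => ⟨fun h => hsub h, fun h => ?_⟩
    have hreal := L_subset ω hω D hD hsub' h
    simp only [Finset.mem_union] at hreal ⊢
    exact hreal

-- counting
variable {m : ℕ}

noncomputable def gOdd (s : Finset (Fin m)) : Finset (Fin (m + 1)) :=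
  if Even s.card then insert (Fin.last m) (s.image Fin.castSucc)
  else s.image Fin.castSucc

lemma last_not_mem (s : Finset (Fin m)) : Fin.last m ∉ s.image Fin.castSucc := by
  simp only [Finset.mem_image, not_exists]
  rintro x ⟨hx, hxe⟩
  exact (Fin.castSucc_lt_last x).ne hxe

lemma gOdd_card_odd (s : Finset (Fin m)) : Odd (gOdd s).card := by
  unfold gOdd
  by_cases h : Even s.card
  · rw [if_pos h, Finset.card_insert_of_notMem (last_not_mem s),
      Finset.card_image_of_injective _ (Fin.castSucc_injective m)]
    exact Even.add_one h
  · rw [if_neg h, Finset.card_image_of_injective _ (Fin.castSucc_injective m)]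
    exact Nat.not_even_iff_odd.mp h

lemma gOdd_filter (s : Finset (Fin m)) :
    (gOdd s).filter (fun x => x ≠ Fin.last m) = s.image Fin.castSucc := by
  unfold gOdd
  have h1 : (s.image Fin.castSucc).filter (fun x => x ≠ Fin.last m) = s.image Fin.castSucc :=
    Finset.filter_eq_self.mpr (fun x hx hxe => last_not_mem s (hxe ▸ hx))
  by_cases h : Even s.card
  · rw [if_pos h, Finset.filter_insert, if_neg (by simp), h1]
  · rw [if_neg h, h1]

lemma gOdd_inj : Function.Injective (gOdd (m := m)) := by
  intro s t h
  have := congrArg (fun u => u.filter (fun x => x ≠ Fin.last m)) h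
  simp only [gOdd_filter] at this
  exact Finset.image_injective (Fin.castSucc_injective m) this

/-- In `K_{k,k} Δ M_k`, every odd-cardinality subset `ω` of the left side generates
a minimal local set, namely `{u_i : i ∈ ω} ∪ {v_j : j ∉ ω}`; hence the graph has at
least `2^(k-1)` minimal local sets. -/
theorem stmt_13 (k : ℕ) (hk : 1 ≤ k) :
    (∀ ω : Finset (Fin k), Odd ω.card →
      (ω.image Sum.inl ∪ ωᶜ.image Sum.inr : Finset (Fin k ⊕ Fin k)) =
          ω.image Sum.inl ∪ oddN (kkmk k) (ω.image Sum.inl) ∧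
        IsMinimalLocalSet (kkmk k) (ω.image Sum.inl ∪ ωᶜ.image Sum.inr)) ∧
    2 ^ (k - 1) ≤
      {L : Finset (Fin k ⊕ Fin k) | IsMinimalLocalSet (kkmk k) L}.ncard := by
  constructor
  · intro ω hω
    refine ⟨?_, L_min ω hω⟩
    refine Finset.ext fun a => ?_
    simp only [Finset.mem_union, oddN_image_inl ω hω]
  · obtain ⟨m, rfl⟩ : ∃ m, k = m + 1 := ⟨k - 1, by omega⟩
    set S := {L : Finset (Fin (m + 1) ⊕ Fin (m + 1)) | IsMinimalLocalSet (kkmk (m + 1)) L}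
      with hS
    set F : Finset (Fin m) → Finset (Fin (m + 1) ⊕ Fin (m + 1)) :=
      fun s => (gOdd s).image Sum.inl ∪ (gOdd s)ᶜ.image Sum.inr with hF
    have hFinj : Function.Injective F := by
      intro s t h
      apply gOdd_inj
      refine Finset.ext fun i => ?_
      rw [Finset.ext_iff] at h
      have hi := h (Sum.inl i)
      rwa [hF, mem_L_inl, mem_L_inl] at hi
    have hFS : ∀ s, F s ∈ S := fun s => L_min (gOdd s) (gOdd_card_odd s)
    have hfin : S.Finite := Set.toFinite S
    have hsub : Finset.univ.image F ⊆ hfin.toFinset := by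
      intro L hL
      obtain ⟨s, _, rfl⟩ := Finset.mem_image.mp hL
      rw [Set.Finite.mem_toFinset]
      exact hFS s
    have hcard : (Finset.univ.image F).card = 2 ^ m := by
      rw [Finset.card_image_of_injective _ hFinj, Finset.card_univ, Fintype.card_finset,
        Fintype.card_fin]
    calc 2 ^ (m + 1 - 1) = (Finset.univ.image F).card := by rw [hcard]; norm_num
      _ ≤ hfin.toFinset.card := Finset.card_le_card hsub
      _ = S.ncard := (Set.ncard_eq_toFinset_card S hfin).symm
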